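/- Let (Rels, Funcs) be a schema admitting the multi-tree bijectivity partitioning into pairs (f_i,g_i) as above. For every directed path in SG(Rels, Funcs) visiting nodes R_1, R_2, ..., R_{m-1}, R_m with R_1 = R_m and R_1 ≠ R_i for all 2 ≤ i ≤ m−1, it holds that R_2 = R_{m-1}, and moreover the edge f from R_1 to R_2 and the edge g from R_{m-1} to R_m form a pair (f, g) of the partitioning. -/

import Mathlib

/-- A relational schema: relation names and function names with a domain and a range.
Its schema graph is the directed multigraph with nodes the relation names and an edge
labelled `f` from `dom f` to `rng f` for every function name `f`. -/
structure Schema where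
  Rel : Type
  Func : Type
  dom : Func → Rel
  rng : Func → Rel

/-- Directed paths in the schema graph: `IsPath S R F T` holds if `F` is the sequence of
edge labels of a directed path from node `R` to node `T`. -/
inductive IsPath (S : Schema) : S.Rel → List S.Func → S.Rel → Prop
  | nil (R : S.Rel) : IsPath S R [] R
  | cons {R T : S.Rel} {f : S.Func} {F : List S.Func} :
      S.dom f = R → IsPath S (S.rng f) F T → IsPath S R (f :: F) T

/-- The schema graph restricted to the edges in `H` is a multi-tree: there is at most one
directed path (using only edges in `H`) between any two nodes. -/
def MultiTreeOn (S : Schema) (H : Set S.Func) : Prop :=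
  ∀ (R T : S.Rel) (F F' : List S.Func),
    IsPath S R F T → IsPath S R F' T →
    (∀ f ∈ F, f ∈ H) → (∀ f ∈ F', f ∈ H) → F = F'

/-- A disjoint partitioning of the function names into pairs `(f, pair f)` with inverse
domains and ranges, given as a fixed-point free involution. -/
structure Pairing (S : Schema) where
  pair : S.Func → S.Func
  pair_invol : ∀ f, pair (pair f) = f
  pair_ne : ∀ f, pair f ≠ f
  dom_pair : ∀ f, S.dom (pair f) = S.rng f
  rng_pair : ∀ f, S.rng (pair f) = S.dom f

/-- Every choice of one function name from each pair yields a multi-tree. -/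
def Pairing.MultiTreeCond {S : Schema} (pr : Pairing S) : Prop :=
  ∀ H : Set S.Func, (∀ f, f ∈ H ↔ pr.pair f ∉ H) → MultiTreeOn S H

/-- The sequence of nodes `R₁, R₂, …, Rₘ` visited by a path with edge labels `F`
starting at `R`. -/
def pathNodes (S : Schema) : S.Rel → List S.Func → List S.Rel
  | R, [] => [R]
  | R, f :: F => R :: pathNodes S (S.rng f) F

/- ### Auxiliary lemmas -/

lemma IsPath.split {S : Schema} {X Y : S.Rel} :
    ∀ {A B : List S.Func}, IsPath S X (A ++ B) Y →
      ∃ Z, IsPath S X A Z ∧ IsPath S Z B Y := by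
  intro A
  induction A generalizing X with
  | nil => intro B h; exact ⟨X, IsPath.nil X, h⟩
  | cons a A ih =>
    intro B h
    cases h with
    | cons hd ht =>
      obtain ⟨Z, h1, h2⟩ := ih ht
      exact ⟨Z, IsPath.cons hd h1, h2⟩

lemma IsPath.glue {S : Schema} {X Y Z : S.Rel} :
    ∀ {A B : List S.Func}, IsPath S X A Z → IsPath S Z B Y → IsPath S X (A ++ B) Y := by
  intro A
  induction A generalizing X with
  | nil => intro B h1 h2; cases h1; exact h2
  | cons a A ih =>
    intro B h1 h2
    cases h1 with
    | cons hd ht => exact IsPath.cons hd (ih ht h2)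

lemma IsPath.nil_eq {S : Schema} {X Y : S.Rel} (h : IsPath S X [] Y) : X = Y := by
  cases h; rfl

lemma IsPath.rng_getLast {S : Schema} {X Y : S.Rel} :
    ∀ {F : List S.Func}, IsPath S X F Y → (hF : F ≠ []) → S.rng (F.getLast hF) = Y := by
  intro F
  induction F generalizing X with
  | nil => intro _ hF; exact absurd rfl hF
  | cons a A ih =>
    intro h _
    cases h with
    | cons hd ht =>
      cases A with
      | nil => cases ht; simp
      | cons b B => rw [List.getLast_cons (by simp)]; exact ih ht (by simp)

lemma not_chain'_decomp {α : Type*} {R : α → α → Prop} :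
    ∀ (l : List α), ¬ l.Chain' R → ∃ A a b C, l = A ++ a :: b :: C ∧ ¬ R a b
  | [], h => absurd List.isChain_nil h
  | [x], h => absurd (List.isChain_singleton x) h
  | x :: y :: t, h => by
    rw [List.Chain', List.isChain_cons_cons] at h
    by_cases hxy : R x y
    · have h' : ¬ (y :: t).Chain' R := fun hc => h ⟨hxy, hc⟩
      obtain ⟨A, a, b, C, hE, hR⟩ := not_chain'_decomp (y :: t) h'
      exact ⟨x :: A, a, b, C, by rw [hE]; rfl, hR⟩
    · exact ⟨[], x, y, t, rfl, hxy⟩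

lemma mem_pair_mem_decomp {S : Schema} (pr : Pairing S) {f : S.Func} {F : List S.Func}
    (h1 : f ∈ F) (h2 : pr.pair f ∈ F) :
    ∃ A x B C, F = A ++ x :: (B ++ pr.pair x :: C) := by
  obtain ⟨A, A', rfl⟩ := List.append_of_mem h1
  rcases List.mem_append.1 h2 with hA | hA'
  · obtain ⟨P, Q, rfl⟩ := List.append_of_mem hA
    refine ⟨P, pr.pair f, Q, A', ?_⟩
    rw [pr.pair_invol]
    simp
  · rcases List.mem_cons.1 hA' with he | hA'
    · exact absurd he (pr.pair_ne f)
    · obtain ⟨B, C, rfl⟩ := List.append_of_mem hA'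
      exact ⟨A, f, B, C, by simp⟩

/-- The setoid identifying each function name with its pair. -/
def pairSetoid (S : Schema) (pr : Pairing S) : Setoid S.Func where
  r f g := g = f ∨ g = pr.pair f
  iseqv := by
    refine ⟨fun f => Or.inl rfl, ?_, ?_⟩
    · rintro f g (rfl | rfl)
      · exact Or.inl rfl
      · exact Or.inr (pr.pair_invol f).symm
    · rintro f g k (rfl | rfl) (rfl | rfl)
      · exact Or.inl rfl
      · exact Or.inr rfl
      · exact Or.inr rfl
      · exact Or.inl (pr.pair_invol f)

/-- Given a list of function names none of whose pairs appear in the list, there is a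
selection set `H` (one of each pair) containing all of them. -/
lemma exists_selection {S : Schema} (pr : Pairing S) (F : List S.Func)
    (hc : ∀ f ∈ F, pr.pair f ∉ F) :
    ∃ H : Set S.Func, (∀ f, f ∈ H ↔ pr.pair f ∉ H) ∧ ∀ f ∈ F, f ∈ H := by
  classical
  let st := pairSetoid S pr
  let rep : S.Func → S.Func := fun f => (Quotient.mk st f).out
  have hrep_eq : ∀ f, rep (pr.pair f) = rep f := by
    intro f
    show (Quotient.mk st (pr.pair f)).out = (Quotient.mk st f).out
    have : Quotient.mk st (pr.pair f) = Quotient.mk st f :=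
      (Quotient.sound (Or.inr rfl : st.r f (pr.pair f))).symm
    rw [this]
  have hrep_mem : ∀ f, rep f = f ∨ rep f = pr.pair f := by
    intro f
    have h : st.r ((Quotient.mk st f).out) f := Quotient.exact (Quotient.out_eq _)
    rcases h with h | h
    · exact Or.inl h.symm
    · right
      show (Quotient.mk st f).out = pr.pair f
      have : pr.pair f = pr.pair (pr.pair ((Quotient.mk st f).out)) := by rw [← h]
      rw [this, pr.pair_invol]
  refine ⟨{f | f ∈ F ∨ (pr.pair f ∉ F ∧ rep f = f)}, ?_, fun f hf => Or.inl hf⟩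
  intro f
  simp only [Set.mem_setOf_eq]
  constructor
  · rintro (hf | ⟨hpf, hrep⟩)
    · rintro (h1 | ⟨h2, h3⟩)
      · exact hc f hf h1
      · rw [pr.pair_invol] at h2; exact h2 hf
    · rintro (h1 | ⟨h2, h3⟩)
      · exact hpf h1
      · rw [hrep_eq f, hrep] at h3
        exact pr.pair_ne f h3.symm
  · intro hnp
    by_cases hf : f ∈ F
    · exact Or.inl hf
    · right
      refine ⟨fun hpf => hnp (Or.inl hpf), ?_⟩
      rcases hrep_mem f with h | h
      · exact h
      · exfalso
        apply hnp
        right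
        refine ⟨by rw [pr.pair_invol]; exact hf, ?_⟩
        rw [hrep_eq f, h]

/-- There is no nonempty backtrack-free cycle. -/
lemma no_reduced_cycle {S : Schema} (pr : Pairing S) (h : pr.MultiTreeCond) :
    ∀ (n : ℕ) (F : List S.Func) (X : S.Rel), F.length ≤ n → F ≠ [] →
      IsPath S X F X → F.Chain' (fun a b => b ≠ pr.pair a) → False := by
  intro n
  induction n with
  | zero =>
    intro F X hl hne _ _
    exact hne (List.length_eq_zero_iff.1 (Nat.le_zero.1 hl))
  | succ n ih =>
    intro F X hl hne hp hch
    by_cases hc : ∃ f ∈ F, pr.pair f ∈ F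
    · obtain ⟨f, hf, hpf⟩ := hc
      obtain ⟨A, x, B, C, rfl⟩ := mem_pair_mem_decomp pr hf hpf
      -- F = A ++ (x :: (B ++ pair x :: C))
      obtain ⟨Z, hA, hrest⟩ := IsPath.split hp
      cases hrest with
      | cons hdx hrest2 =>
        obtain ⟨W, hB, hrest3⟩ := IsPath.split hrest2
        cases hrest3 with
        | cons hdpx _ =>
          have hW : W = S.rng x := by rw [← hdpx, pr.dom_pair]
          rw [hW] at hB
          -- extract chain facts
          rw [List.Chain', List.isChain_append] at hch
          have hch2 := hch.2.1
          rw [List.isChain_cons] at hch2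
          have hch3 := hch2.2
          rw [List.isChain_append] at hch3
          have hBne : B ≠ [] := by
            rintro rfl
            have := hch2.1 (pr.pair x) (by simp)
            exact this rfl
          refine ih B (S.rng x) ?_ hBne hB hch3.1
          have := hl
          simp only [List.length_append, List.length_cons] at this
          omega
    · push_neg at hc
      obtain ⟨H, hH, hFH⟩ := exists_selection pr F hc
      have := h H hH X X F [] hp (IsPath.nil X) hFH (by simp)
      exact hne this

lemma pathNodes_eq (S : Schema) : ∀ (F : List S.Func) (R : S.Rel),
    pathNodes S R F = R :: F.map S.rng := by
  intro F
  induction F with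
  | nil => intro R; rfl
  | cons f F ih => intro R; simp [pathNodes, ih]

/-- Main argument, by strong induction on the length of the cycle. -/
lemma main_aux {S : Schema} (pr : Pairing S) (h : pr.MultiTreeCond) :
    ∀ (n : ℕ) (F : List S.Func) (R : S.Rel), F.length ≤ n → (hF : F ≠ []) →
      IsPath S R F R → (∀ f ∈ F.dropLast, S.rng f ≠ R) →
      S.rng (F.head hF) = S.dom (F.getLast hF) ∧ F.getLast hF = pr.pair (F.head hF) := by
  intro n
  induction n with
  | zero =>
    intro F R hl hF
    exact absurd (List.length_eq_zero_iff.1 (Nat.le_zero.1 hl)) hF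
  | succ n ih =>
    intro F R hl hF hp hmid
    have hnc : ¬ F.Chain' (fun a b => b ≠ pr.pair a) :=
      fun hch => no_reduced_cycle pr h F.length F R le_rfl hF hp hch
    obtain ⟨A, a, b, C, hFE, hab⟩ := not_chain'_decomp F hnc
    have hb : b = pr.pair a := not_not.1 hab
    subst hb
    subst hFE
    obtain ⟨Z, hA, hrest⟩ := IsPath.split hp
    cases hrest with
    | cons hda hrest2 =>
      cases hrest2 with
      | cons hdpa hrest3 =>
        -- hrest3 : IsPath S (S.rng (pr.pair a)) C R
        have hZ : S.rng (pr.pair a) = Z := by rw [pr.rng_pair, hda]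
        rw [hZ] at hrest3
        rcases eq_or_ne A [] with rfl | hAne
        · have hZR : Z = R := (IsPath.nil_eq hA).symm
          rcases eq_or_ne C [] with rfl | hCne
          · -- F = [a, pair a]
            constructor
            · simp only [List.nil_append, List.head_cons]
              rw [List.getLast_cons (by simp), List.getLast_singleton]
              rw [pr.dom_pair]
            · simp only [List.nil_append, List.head_cons]
              rw [List.getLast_cons (by simp), List.getLast_singleton]
          · -- A = [], C ≠ []: the node after the backtrack equals R, an interior node
            exfalso
            refine hmid (pr.pair a) ?_ (by rw [hZ, hZR])
            have hdl : (([] : List S.Func) ++ a :: pr.pair a :: C).dropLast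
                = a :: pr.pair a :: C.dropLast := by
              simp only [List.nil_append]
              rw [show a :: pr.pair a :: C = [a, pr.pair a] ++ C by simp,
                List.dropLast_append_of_ne_nil hCne]
              simp
            rw [hdl]
            exact List.mem_cons_of_mem _ List.mem_cons_self
        · -- A ≠ []
          rcases eq_or_ne C [] with rfl | hCne
          · -- C = []: then rng (pair a) = R, so Z = R, and rng (getLast A) = Z = R,
            -- with getLast A an interior edge: contradiction
            have hZR : Z = R := IsPath.nil_eq hrest3
            exfalso
            have hgl : S.rng (A.getLast hAne) = R := by
              rw [IsPath.rng_getLast hA hAne, hZR]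
            apply hmid (A.getLast hAne) _ hgl
            have : A ++ a :: pr.pair a :: ([] : List S.Func) = (A ++ [a]) ++ [pr.pair a] := by
              simp
            rw [this, List.dropLast_concat]
            exact List.mem_append_left _ (List.getLast_mem hAne)
          · -- A ≠ [], C ≠ []: splice out the backtrack and recurse
            have hp' : IsPath S R (A ++ C) R := IsPath.glue hA hrest3
            have hne' : A ++ C ≠ [] := fun hh => hAne (List.append_eq_nil_iff.1 hh).1
            have hmid' : ∀ f ∈ (A ++ C).dropLast, S.rng f ≠ R := by
              intro f hf
              apply hmid f
              rw [List.dropLast_append_of_ne_nil hCne] at hf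
              have hdl : (A ++ a :: pr.pair a :: C).dropLast
                  = A ++ a :: pr.pair a :: C.dropLast := by
                rw [List.dropLast_append_of_ne_nil (l := a :: pr.pair a :: C) (by simp)]
                simp only [List.dropLast_cons₂]
                rw [List.dropLast_cons_of_ne_nil hCne]
              rw [hdl]
              rcases List.mem_append.1 hf with hfa | hfc
              · exact List.mem_append_left _ hfa
              · refine List.mem_append_right _ ?_
                exact List.mem_cons_of_mem _ (List.mem_cons_of_mem _ hfc)
            have hlen : (A ++ C).length ≤ n := by
              simp only [List.length_append, List.length_cons] at hl ⊢
              omega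
            obtain ⟨h1, h2⟩ := ih (A ++ C) R hlen hne' hp' hmid'
            have hhead : (A ++ C).head hne' = (A ++ a :: pr.pair a :: C).head hF := by
              rw [List.head_append_of_ne_nil hAne, List.head_append_of_ne_nil hAne]
            have hlast : (A ++ C).getLast hne' = (A ++ a :: pr.pair a :: C).getLast hF := by
              rw [List.getLast_append_of_right_ne_nil A C hCne,
                List.getLast_append_of_right_ne_nil A (a :: pr.pair a :: C) (by simp)]
              rw [List.getLast_cons (by simp), List.getLast_cons hCne]
            rw [hhead, hlast] at h1 h2
            exact ⟨h1, h2⟩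

/-- For a schema admitting a multi-tree bijectivity partitioning: on
every directed path visiting nodes `R₁,…,Rₘ` with `R₁ = Rₘ` and `R₁ ≠ Rᵢ` for all
`2 ≤ i ≤ m−1`, we have `R₂ = R_{m−1}`, and the first edge `f` (from `R₁` to `R₂`) and the
last edge `g` (from `R_{m−1}` to `Rₘ`) form a pair `(f, g)` of the partitioning. -/
theorem first_last_edge_paired_of_cycle
    (S : Schema) (pr : Pairing S) (h : pr.MultiTreeCond)
    (R : S.Rel) (F : List S.Func) (hF : F ≠ []) (hp : IsPath S R F R)
    (hmid : ∀ X ∈ ((pathNodes S R F).drop 1).dropLast, X ≠ R) :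
    S.rng (F.head hF) = S.dom (F.getLast hF) ∧ F.getLast hF = pr.pair (F.head hF) := by
  apply main_aux pr h F.length F R le_rfl hF hp
  intro f hf
  apply hmid (S.rng f)
  rw [pathNodes_eq, List.drop_one, List.tail_cons, ← List.map_dropLast]
  exact List.mem_map_of_mem (f := S.rng) hf
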